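/- arXiv:1711.02325 — 2 statements merged into one kernel-verified Lean document; each statement's English description precedes it below -/
import Mathlib

section
/- For all integers n ≥ 0, p_{-2}(5n+2) ≡ 0 (mod 5), where p_{-2}(n) is the number of 2-colored partitions of n. -/
/-- The number of `k`-colored partitions of `n`: a `k`-colored partition is a
`k`-tuple of ordinary partitions whose sizes sum to `n`. -/
def coloredPartitions (k n : ℕ) : ℕ :=
  ∑ c ∈ Finset.Nat.antidiagonalTuple k n, ∏ i, Fintype.card (Nat.Partition (c i))

namespace P2Aux

open Finset Polynomial

noncomputable section

/-! ### Triangular numbers and the exponent function -/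

/-- triangular number -/
def T (d : ℕ) : ℕ := ∑ i ∈ range (d + 1), i

lemma T_succ (d : ℕ) : T (d + 1) = T d + (d + 1) := Finset.sum_range_succ _ _

lemma T_zero : T 0 = 0 := by simp [T]

lemma two_T (d : ℕ) : 2 * T d = d * (d + 1) := by
  induction d with
  | zero => simp [T]
  | succ d ih => rw [T_succ, Nat.mul_add, ih]; ring

lemma mul_succ_mod5 (k : ℕ) : k * (k + 1) % 5 ≠ 4 := by
  induction k using Nat.strong_induction_on with
  | _ k ih =>
    match k, ih with
    | 0, _ | 1, _ | 2, _ | 3, _ | 4, _ => decide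
    | k + 5, ih =>
      have h : (k + 5) * (k + 5 + 1) = k * (k + 1) + 5 * (2 * k + 6) := by ring
      have := ih k (by omega)
      omega

/-- `5*n+2` is not triangular. -/
lemma not_triangular (n k : ℕ) : T k ≠ 5 * n + 2 := by
  intro h
  have h2 := two_T k
  exact mul_succ_mod5 k (by omega)

/-- the exponent appearing in the finite Jacobi triple product -/
def ε (n j : ℕ) : ℕ := if n ≤ j then T (j - n) else T (n - j - 1)

lemma eps1 (n k : ℕ) : ε n k + n = ε (n + 1) k + k := by
  rcases le_or_gt n k with h | h
  · rcases eq_or_lt_of_le h with rfl | h'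
    · rw [ε, ε, if_pos le_rfl, if_neg (by omega)]
      simp
    · obtain ⟨d, rfl⟩ : ∃ d, k = n + (d + 1) := ⟨k - n - 1, by omega⟩
      rw [ε, ε, if_pos (by omega), if_pos (by omega),
        show n + (d + 1) - n = d + 1 by omega, show n + (d + 1) - (n + 1) = d by omega, T_succ]
      omega
  · obtain ⟨d, rfl⟩ : ∃ d, n = k + (d + 1) := ⟨n - k - 1, by omega⟩
    rw [ε, ε, if_neg (by omega), if_neg (by omega),
      show k + (d + 1) - k - 1 = d by omega, show k + (d + 1) + 1 - k - 1 = d + 1 by omega, T_succ]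
    omega

lemma eps2 (n k : ℕ) : ε n k + (n + 1) + (k + 2) = ε (n + 1) (k + 2) + (2 * n + 2) := by
  rcases le_or_gt n k with h | h
  · rw [ε, ε, if_pos h, if_pos (by omega),
      show k + 2 - (n + 1) = (k - n) + 1 by omega, T_succ]
    omega
  · rcases eq_or_lt_of_le (show k + 1 ≤ n from h) with rfl | h'
    · rw [ε, ε, if_neg (by omega), if_pos (by omega),
        show k + 1 - k - 1 = 0 by omega, show k + 2 - (k + 1 + 1) = 0 by omega]
      omega
    · rw [ε, ε, if_neg (by omega), if_neg (by omega),
        show n - k - 1 = (n - k - 2) + 1 by omega,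
        show n + 1 - (k + 2) - 1 = n - k - 2 by omega, T_succ]
      omega

lemma eps3 (n k : ℕ) : ε n k = ε (n + 1) (k + 1) := by
  rw [ε, ε]
  split_ifs with h1 h2 h2 <;> first | (congr 1; omega) | omega

lemma eps_triangular (n j : ℕ) : ∃ k, ε n j = T k := by
  unfold ε; split <;> exact ⟨_, rfl⟩

/-! ### Gaussian binomials -/

/-- Gaussian binomial coefficient as a polynomial in `ℤ[X]`. -/
def qb : ℕ → ℕ → ℤ[X]
  | 0, 0 => 1
  | 0, _ + 1 => 0
  | m + 1, 0 => qb m 0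
  | m + 1, k + 1 => qb m (k + 1) * X ^ (k + 1) + qb m k

lemma qb_zero_right (m : ℕ) : qb m 0 = 1 := by
  induction m with
  | zero => rfl
  | succ m ih => rw [qb, ih]

lemma qb_eq_zero {m k : ℕ} (h : m < k) : qb m k = 0 := by
  induction m generalizing k with
  | zero => match k, h with | k + 1, _ => rfl
  | succ m ih =>
      match k, h with
      | k + 1, h =>
        rw [qb, ih (by omega), ih (by omega), zero_mul, zero_add]

lemma qb_diag (m : ℕ) : qb m m = 1 := by
  induction m with
  | zero => rfl
  | succ m ih => rw [qb, ih, qb_eq_zero (by omega), zero_mul, zero_add]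

lemma qb_succ_succ (m k : ℕ) :
    qb (m + 1) (k + 1) = qb m (k + 1) * X ^ (k + 1) + qb m k := rfl

/-- second Pascal recurrence -/
lemma qb_pascal2 (m k : ℕ) : qb (m + 1) (k + 1) = qb m (k + 1) + X ^ (m - k) * qb m k := by
  induction m generalizing k with
  | zero =>
      match k with
      | 0 => simp [qb_succ_succ, qb, qb_zero_right]
      | k + 1 => simp [qb_succ_succ, qb_eq_zero (show 0 < k + 2 by omega),
          qb_eq_zero (show 0 < k + 1 by omega), qb_eq_zero (show 1 < k + 2 by omega)]
  | succ m ih =>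
      rcases lt_or_ge (m + 1) k with h | h
      · rw [qb_eq_zero (show m + 2 < k + 1 by omega), qb_eq_zero (show m + 1 < k + 1 by omega),
          qb_eq_zero (show m + 1 < k by omega), mul_zero, add_zero]
      rcases eq_or_lt_of_le h with rfl | h'
      · rw [qb_diag, qb_eq_zero (show m + 1 < m + 1 + 1 by omega), qb_diag,
          show m + 1 - (m + 1) = 0 by omega]
        simp
      -- now k ≤ m
      have hk : k ≤ m := by omega
      rw [qb_succ_succ (m + 1) k]
      conv_lhs => rw [ih k]
      match k, hk with
      | 0, _ =>
          simp only [qb_zero_right, qb_succ_succ, Nat.sub_zero]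
          ring
      | k' + 1, hk =>
          obtain ⟨d, rfl⟩ : ∃ d, m = k' + 1 + d := ⟨m - (k' + 1), by omega⟩
          conv_lhs => rw [ih k']
          conv_rhs => rw [qb_succ_succ (k' + 1 + d) (k' + 1), qb_succ_succ (k' + 1 + d) k']
          rw [show k' + 1 + d - (k' + 1) = d by omega, show k' + 1 + d - k' = d + 1 by omega,
            show k' + 1 + d + 1 - (k' + 1) = d + 1 by omega]
          ring

lemma qb_star1 (n : ℕ) : qb (2 * n + 2) 1 =
    qb (2 * n) 0 * (1 + X ^ (2 * n + 1)) + qb (2 * n) 1 * X ^ 1 := by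
  rw [show 2 * n + 2 = (2 * n + 1) + 1 by omega, qb_succ_succ, qb_zero_right,
    show qb (2 * n + 1) 1 = qb (2 * n) 1 + X ^ (2 * n - 0) * qb (2 * n) 0 from qb_pascal2 _ 0,
    qb_zero_right, Nat.sub_zero]
  ring

/-- the key two-step recurrence -/
lemma qb_star (n j : ℕ) : qb (2 * n + 2) (j + 2) =
    qb (2 * n) (j + 1) * (1 + X ^ (2 * n + 1)) + qb (2 * n) (j + 2) * X ^ (j + 2)
      + qb (2 * n) j * X ^ (2 * n - j) := by
  rcases lt_or_ge j (2 * n) with h | h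
  · rw [show 2 * n + 2 = (2 * n + 1) + 1 by omega, qb_succ_succ, qb_pascal2, qb_pascal2,
      show 2 * n - (j + 1) = 2 * n - j - 1 by omega,
      show (X : ℤ[X]) ^ (2 * n - j) = X ^ (2 * n - j - 1) * X ^ 1 from by
        rw [← pow_add]; congr 1; omega,
      show (X : ℤ[X]) ^ (2 * n + 1) = X ^ (2 * n - j - 1) * X ^ (j + 2) from by
        rw [← pow_add]; congr 1; omega]
    ring
  rcases eq_or_lt_of_le h with heq | h'
  · subst heq
    rw [qb_diag, qb_eq_zero (by omega), qb_eq_zero (by omega), qb_diag, Nat.sub_self]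
    simp
  · rw [qb_eq_zero (by omega), qb_eq_zero (by omega), qb_eq_zero (by omega),
      qb_eq_zero (by omega)]
    simp

/-- product formula: `qb m k * E k * E (m-k) = E m` for `k ≤ m` -/
def E (n : ℕ) : ℤ[X] := ∏ i ∈ range n, (1 - X ^ (i + 1))

lemma E_succ (n : ℕ) : E (n + 1) = E n * (1 - X ^ (n + 1)) := Finset.prod_range_succ _ _

lemma E_zero : E 0 = 1 := rfl

lemma qb_prod {m k : ℕ} (h : k ≤ m) : qb m k * E k * E (m - k) = E m := by
  induction m generalizing k with
  | zero =>
      match k, h with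
      | 0, _ => simp [E_zero, qb_zero_right]
  | succ m ih =>
      match k, h with
      | 0, _ =>
          simp [E_zero, qb_zero_right]
      | k' + 1, h =>
          rw [qb_succ_succ]
          rcases eq_or_lt_of_le h with heq | hlt
          · -- k'+1 = m+1
            have hk : k' = m := by omega
            subst hk
            rw [qb_eq_zero (by omega), Nat.sub_self, E_zero, qb_diag]
            ring
          · -- k'+1 ≤ m
            have hk : k' + 1 ≤ m := by omega
            have h1 := ih hk
            have h2 := ih (show k' ≤ m by omega)
            have e1 : E (m - k') = E (m - (k' + 1)) * (1 - X ^ (m - k')) := by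
              rw [show m - k' = (m - (k' + 1)) + 1 by omega, E_succ,
                show m - (k' + 1) + 1 = m - k' by omega]
            have e2 : E (k' + 1) = E k' * (1 - X ^ (k' + 1)) := E_succ k'
            rw [e1] at h2
            rw [e2] at h1
            rw [show m + 1 - (k' + 1) = (m - (k' + 1)) + 1 by omega, E_succ (m - (k' + 1)),
              show m - (k' + 1) + 1 = m - k' by omega, E_succ m, e2,
              show (X : ℤ[X]) ^ (m + 1) = X ^ (k' + 1) * X ^ (m - k') from by
                rw [← pow_add]; congr 1; omega]
            linear_combination (X ^ (k' + 1) * (1 - X ^ (m - k'))) * h1 + (1 - X ^ (k' + 1)) * h2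

/-! ### Divisibility lemmas -/

lemma E_coeff_zero (n : ℕ) : (E n).coeff 0 = 1 := by
  rw [Polynomial.coeff_zero_eq_eval_zero, E, Polynomial.eval_prod]
  simp

lemma X_pow_dvd_E_sub_E' {a b k : ℕ} (hk : k ≤ a) (hab : a ≤ b) :
    (X : ℤ[X]) ^ (k + 1) ∣ E b - E a := by
  induction b with
  | zero => match a, hab with | 0, _ => simp
  | succ b ih =>
      rcases eq_or_lt_of_le hab with heq | hlt
      · rw [heq]; simp
      · have h1 := ih (by omega)
        have : E (b + 1) - E a = (E b - E a) - X ^ (b + 1) * E b := by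
          rw [E_succ]; ring
        rw [this]
        exact dvd_sub h1 (dvd_mul_of_dvd_left (pow_dvd_pow X (by omega)) _)

lemma X_pow_dvd_E_sub_E {a b k : ℕ} (hk : k ≤ a) (hk' : k ≤ b) :
    (X : ℤ[X]) ^ (k + 1) ∣ E a - E b := by
  rcases le_total a b with h | h
  · have := X_pow_dvd_E_sub_E' hk h
    rw [show E a - E b = -(E b - E a) by ring]
    exact this.neg_right
  · exact X_pow_dvd_E_sub_E' hk' h

lemma X_pow_dvd_of_mul {f g : ℤ[X]} {t : ℕ} (h : (X : ℤ[X]) ^ t ∣ f * g)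
    (hg : g.coeff 0 = 1) : (X : ℤ[X]) ^ t ∣ f := by
  rw [Polynomial.X_pow_dvd_iff] at h ⊢
  intro d hd
  induction d using Nat.strong_induction_on with
  | _ d ihd =>
    have hmul := h d hd
    rw [Polynomial.coeff_mul] at hmul
    rw [Finset.sum_eq_single (d, 0)] at hmul
    · rwa [hg, mul_one] at hmul
    · rintro ⟨u, v⟩ huv hne
      rw [Finset.HasAntidiagonal.mem_antidiagonal] at huv
      have hu : u < d := by
        rcases Nat.lt_or_ge u d with h' | h'
        · exact h'
        · exfalso
          exact hne (by ext <;> simp <;> omega)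
      rw [ihd u hu (by omega), zero_mul]
    · intro hmem
      exact absurd (Finset.HasAntidiagonal.mem_antidiagonal.mpr (by simp)) hmem

/-- `E n * qb (2n) j` agrees with `1` up to degree `min j (2n - j)`. -/
lemma unit_approx {n j : ℕ} (hj : j ≤ 2 * n) :
    (X : ℤ[X]) ^ (min j (2 * n - j) + 1) ∣ E n * qb (2 * n) j - 1 := by
  set t := min j (2 * n - j) with ht
  have key : (E n * qb (2 * n) j - 1) * (E j * E (2 * n - j))
      = (E n - E j) * E (2 * n) + E j * (E (2 * n) - E (2 * n - j)) := by
    have hq := qb_prod hj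
    linear_combination (E n) * hq
  have hdvd : (X : ℤ[X]) ^ (t + 1) ∣ (E n * qb (2 * n) j - 1) * (E j * E (2 * n - j)) := by
    rw [key]
    refine dvd_add (Dvd.dvd.mul_right ?_ _) (Dvd.dvd.mul_left ?_ _) <;>
      apply X_pow_dvd_E_sub_E <;> omega
  apply X_pow_dvd_of_mul hdvd
  rw [Polynomial.coeff_zero_eq_eval_zero, Polynomial.eval_mul]
  rw [← Polynomial.coeff_zero_eq_eval_zero, ← Polynomial.coeff_zero_eq_eval_zero,
    E_coeff_zero, E_coeff_zero, mul_one]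

/-! ### Finite Jacobi triple product -/

/-- the coefficient sequence of the JTP sum -/
def a (n j : ℕ) : ℤ[X] := (-1) ^ (n + j) * qb (2 * n) j * X ^ ε n j

/-- the JTP sum, as a polynomial in `z` over `ℤ[X]` -/
def S (n : ℕ) : Polynomial ℤ[X] := ∑ j ∈ range (2 * n + 1), C (a n j) * X ^ j

lemma a_eq_zero {n j : ℕ} (h : 2 * n < j) : a n j = 0 := by
  rw [a, qb_eq_zero h]; ring

lemma coeff_S (n k : ℕ) : (S n).coeff k = a n k := by
  rw [S, Polynomial.finset_sum_coeff]
  simp only [Polynomial.coeff_C_mul, Polynomial.coeff_X_pow, mul_ite, mul_one, mul_zero]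
  rw [Finset.sum_ite_eq (range (2 * n + 1)) k (a n)]
  split_ifs with h
  · rfl
  · rw [Finset.mem_range] at h
    exact (a_eq_zero (by omega)).symm

lemma a_rec0 (n : ℕ) : a (n + 1) 0 = -(a n 0 * X ^ n) := by
  simp only [a, qb_zero_right, add_zero, mul_one]
  rw [show ε (n + 1) 0 = ε n 0 + n from by have := eps1 n 0; omega, pow_add]
  ring

lemma a_rec1 (n : ℕ) : a (n + 1) 1 = a n 0 * (1 + X ^ (2 * n + 1)) - a n 1 * X ^ n := by
  simp only [a, show 2 * (n + 1) = 2 * n + 2 by omega]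
  rw [qb_star1, qb_zero_right, show ε n 0 = ε (n + 1) 1 from eps3 n 0]
  have e1 : (X : ℤ[X]) ^ (ε n 1) * X ^ n = X ^ (ε (n + 1) 1) * X ^ 1 := by
    rw [← pow_add, ← pow_add]; congr 1; have := eps1 n 1; omega
  linear_combination ((-1 : ℤ[X]) ^ (n + 1) * qb (2 * n) 1) * e1

lemma a_rec2 (n k : ℕ) : a (n + 1) (k + 2) =
    a n (k + 1) * (1 + X ^ (2 * n + 1)) - a n (k + 2) * X ^ n - a n k * X ^ (n + 1) := by
  rcases lt_or_ge (2 * n) k with h | h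
  · rw [a_eq_zero (show 2 * (n + 1) < k + 2 by omega), a_eq_zero (show 2 * n < k + 1 by omega),
      a_eq_zero (show 2 * n < k + 2 by omega), a_eq_zero h]
    ring
  · simp only [a, show 2 * (n + 1) = 2 * n + 2 by omega]
    rw [qb_star, show ε n (k + 1) = ε (n + 1) (k + 2) from eps3 n (k + 1)]
    have e2 : (X : ℤ[X]) ^ (ε n (k + 2)) * X ^ n = X ^ (ε (n + 1) (k + 2)) * X ^ (k + 2) := by
      rw [← pow_add, ← pow_add]; congr 1; have := eps1 n (k + 2); omega
    have e3 : (X : ℤ[X]) ^ (ε n k) * X ^ (n + 1) = X ^ (ε (n + 1) (k + 2)) * X ^ (2 * n - k) := by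
      rw [← pow_add, ← pow_add]; congr 1; have := eps2 n k; omega
    linear_combination ((-1 : ℤ[X]) ^ (n + k) * qb (2 * n) (k + 2)) * e2
      + ((-1 : ℤ[X]) ^ (n + k) * qb (2 * n) k) * e3

lemma coeff_mul_quad (p : Polynomial ℤ[X]) (c b d : ℤ[X]) (k : ℕ) :
    (p * (C c * X - C b - C d * X ^ 2)).coeff k =
      (if 1 ≤ k then p.coeff (k - 1) * c else 0) - p.coeff k * b
        - (if 2 ≤ k then p.coeff (k - 2) * d else 0) := by
  rw [show p * (C c * X - C b - C d * X ^ 2) = p * C c * X ^ 1 - p * C b - p * C d * X ^ 2 by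
    ring]
  rw [Polynomial.coeff_sub, Polynomial.coeff_sub, Polynomial.coeff_mul_X_pow',
    Polynomial.coeff_mul_X_pow', Polynomial.coeff_mul_C, Polynomial.coeff_mul_C,
    Polynomial.coeff_mul_C]
  all_goals (split_ifs <;> ring)

theorem jtp (n : ℕ) :
    (∏ i ∈ range n, (1 - C ((X : ℤ[X]) ^ (i + 1)) * X)) *
      (∏ i ∈ range n, (X - C ((X : ℤ[X]) ^ i))) = S n := by
  induction n with
  | zero =>
      simp [S, a, ε, T_zero, qb_zero_right]
  | succ n ih =>
      rw [Finset.prod_range_succ, Finset.prod_range_succ]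
      have hM : (1 - C ((X : ℤ[X]) ^ (n + 1)) * X) * (X - C ((X : ℤ[X]) ^ n))
          = C (1 + X ^ (2 * n + 1)) * X - C (X ^ n) - C (X ^ (n + 1)) * X ^ 2 := by
        simp only [C_add, C_1, C_pow]
        ring
      rw [show (∏ i ∈ range n, (1 - C ((X : ℤ[X]) ^ (i + 1)) * X)) * (1 - C ((X : ℤ[X]) ^ (n + 1)) * X) *
          ((∏ i ∈ range n, (X - C ((X : ℤ[X]) ^ i))) * (X - C ((X : ℤ[X]) ^ n)))
          = ((∏ i ∈ range n, (1 - C ((X : ℤ[X]) ^ (i + 1)) * X)) * (∏ i ∈ range n, (X - C ((X : ℤ[X]) ^ i)))) *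
            ((1 - C ((X : ℤ[X]) ^ (n + 1)) * X) * (X - C ((X : ℤ[X]) ^ n))) by ring]
      rw [ih, hM]
      apply Polynomial.ext
      intro k
      rw [coeff_mul_quad, coeff_S, coeff_S, coeff_S, coeff_S]
      match k with
      | 0 =>
          simp only [show ¬(1 ≤ 0) by omega, show ¬(2 ≤ 0) by omega, if_neg, if_false]
          rw [a_rec0]
          ring
      | 1 =>
          simp only [show (1:ℕ) - 1 = 0 by omega, show ¬(2 ≤ 1) by omega, if_pos le_rfl, if_false]
          rw [a_rec1]
          ring
      | (k' + 2) =>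
          simp only [show (1:ℕ) ≤ k' + 2 by omega, show (2:ℕ) ≤ k' + 2 by omega, if_pos,
            show k' + 2 - 1 = k' + 1 by omega, show k' + 2 - 2 = k' by omega]
          rw [a_rec2]

/-- Jacobi-derived identity: `E (n+1) * E n` as a signed sum. -/
theorem In (n : ℕ) :
    E (n + 1) * E n = ∑ j ∈ range (2 * n + 3), a (n + 1) j * (j : ℤ[X]) := by
  have hj := jtp (n + 1)
  have hsplit : (∏ i ∈ range (n + 1), (X - C ((X : ℤ[X]) ^ i)))
      = (∏ i ∈ range n, (X - C ((X : ℤ[X]) ^ (i + 1)))) * (X - 1) := by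
    rw [Finset.prod_range_succ']
    simp
  rw [hsplit, ← mul_assoc] at hj
  have hder := congrArg (fun p => Polynomial.eval (1 : ℤ[X]) (Polynomial.derivative p)) hj
  simp only [Polynomial.derivative_mul, Polynomial.derivative_sub, Polynomial.derivative_X,
    Polynomial.derivative_one, sub_zero, mul_one, Polynomial.eval_add, Polynomial.eval_mul,
    Polynomial.eval_sub, Polynomial.eval_X, Polynomial.eval_one, sub_self, mul_zero,
    zero_add] at hder
  rw [show (2 : ℕ) * n + 3 = 2 * (n + 1) + 1 by omega]
  have h1 : Polynomial.eval (1 : ℤ[X])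
      (∏ i ∈ range (n + 1), (1 - C ((X : ℤ[X]) ^ (i + 1)) * X)) = E (n + 1) := by
    rw [Polynomial.eval_prod, E]
    apply Finset.prod_congr rfl
    intro i _
    simp
  have h2 : Polynomial.eval (1 : ℤ[X])
      (∏ i ∈ range n, (X - C ((X : ℤ[X]) ^ (i + 1)))) = E n := by
    rw [Polynomial.eval_prod, E]
    apply Finset.prod_congr rfl
    intro i _
    simp
  have hevalS : Polynomial.eval (1 : ℤ[X]) (Polynomial.derivative (S (n + 1)))
      = ∑ j ∈ range (2 * (n + 1) + 1), a (n + 1) j * (j : ℤ[X]) := by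
    rw [S, Polynomial.derivative_sum]
    rw [Polynomial.eval_finset_sum]
    apply Finset.sum_congr rfl
    intro j _
    rw [Polynomial.derivative_C_mul_X_pow]
    simp
  rw [← hevalS, ← hder, h1, h2]

/-- The key vanishing theorem: coefficients of `E m ^ 3` vanish at
non-triangular indices `N < m`. -/
lemma T_ge (d : ℕ) : d ≤ T d := by
  induction d with
  | zero => simp [T_zero]
  | succ d ih => rw [T_succ]; omega

lemma eps_bound {n N j : ℕ} (hNn : N ≤ n) (hj : j ≤ 2 * n + 2) (hle : ε (n + 1) j ≤ N) :
    N - ε (n + 1) j ≤ min j (2 * (n + 1) - j) := by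
  rcases le_or_gt (n + 1) j with h | h
  · rw [ε, if_pos h] at hle ⊢
    have := T_ge (j - (n + 1))
    omega
  · rw [ε, if_neg (by omega)] at hle ⊢
    have := T_ge (n + 1 - j - 1)
    omega

theorem jacobi_support {m N : ℕ} (hN : N < m) (htri : ∀ k, T k ≠ N) :
    (E m ^ 3).coeff N = 0 := by
  obtain ⟨n, rfl⟩ : ∃ n, m = n + 1 := ⟨m - 1, by omega⟩
  have h3 : E (n + 1) ^ 3 = E (n + 1) * (E (n + 1) * E n) * (1 - X ^ (n + 1)) := by
    rw [E_succ n]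
    ring
  rw [h3, In n, mul_sub, mul_one, Polynomial.coeff_sub,
    Polynomial.coeff_mul_X_pow', if_neg (by omega), sub_zero, Finset.mul_sum,
    Polynomial.finset_sum_coeff]
  apply Finset.sum_eq_zero
  intro j hjmem
  rw [Finset.mem_range] at hjmem
  have hj2 : j ≤ 2 * (n + 1) := by omega
  -- rewrite the term as a constant multiple of (E(n+1) * qb) * X^ε
  have hterm : E (n + 1) * (a (n + 1) j * (j : ℤ[X]))
      = C ((-1) ^ (n + 1 + j) * (j : ℤ)) * ((E (n + 1) * qb (2 * (n + 1)) j) * X ^ ε (n + 1) j) := by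
    rw [a, C_mul, show (C ((-1) ^ (n + 1 + j)) : ℤ[X]) = (-1) ^ (n + 1 + j) by
      rw [map_pow, map_neg, C_1], show (C ((j : ℤ)) : ℤ[X]) = (j : ℤ[X]) by
      rw [Polynomial.C_eq_natCast]]
    ring
  rw [hterm, Polynomial.coeff_C_mul, Polynomial.coeff_mul_X_pow']
  split_ifs with hle
  · -- ε ≤ N
    have hεN : ε (n + 1) j < N := by
      rcases eq_or_lt_of_le hle with heq | h
      · exfalso
        obtain ⟨k, hk⟩ := eps_triangular (n + 1) j
        exact htri k (by omega)
      · exact h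
    have hdvd := unit_approx (n := n + 1) (j := j) hj2
    rw [Polynomial.X_pow_dvd_iff] at hdvd
    have hco := hdvd (N - ε (n + 1) j) (by
      have := eps_bound (show N ≤ n by omega) (show j ≤ 2 * n + 2 by omega) hle
      omega)
    rw [Polynomial.coeff_sub] at hco
    have h1 : (1 : ℤ[X]).coeff (N - ε (n + 1) j) = 0 := by
      rw [Polynomial.coeff_one, if_neg (by omega)]
    rw [h1, sub_zero] at hco
    rw [hco, mul_zero]
  · ring

/-! ### Power series: generating function for partitions (adapted from
`Archive.Wiedijk100Theorems.Partition` in mathlib) -/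

section PS

open PowerSeries
open scoped Classical

variable {α : Type*}

/-- A convenience constructor for the power series whose coefficients indicate a subset. -/
def indicatorSeries (α : Type*) [Semiring α] (s : Set ℕ) : PowerSeries α :=
  PowerSeries.mk fun n => if n ∈ s then 1 else 0

theorem coeff_indicator (s : Set ℕ) [Semiring α] (n : ℕ) :
    coeff n (indicatorSeries α s) = if n ∈ s then 1 else 0 :=
  coeff_mk _ _

theorem coeff_indicator_pos (s : Set ℕ) [Semiring α] (n : ℕ) (h : n ∈ s) :
    coeff n (indicatorSeries α s) = 1 := by rw [coeff_indicator, if_pos h]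

theorem coeff_indicator_neg (s : Set ℕ) [Semiring α] (n : ℕ) (h : n ∉ s) :
    coeff n (indicatorSeries α s) = 0 := by rw [coeff_indicator, if_neg h]

theorem constantCoeff_indicator (s : Set ℕ) [Semiring α] :
    constantCoeff (indicatorSeries α s) = if 0 ∈ s then 1 else 0 :=
  rfl

theorem num_series' [Field α] (i : ℕ) :
    (1 - (X : PowerSeries α) ^ (i + 1))⁻¹ = indicatorSeries α {k | i + 1 ∣ k} := by
  rw [PowerSeries.inv_eq_iff_mul_eq_one]
  · ext n
    cases n with
    | zero => simp [mul_sub, zero_pow, constantCoeff_indicator]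
    | succ n =>
      simp only [PowerSeries.coeff_one, if_false, mul_sub, mul_one, coeff_indicator,
        LinearMap.map_sub, reduceCtorEq]
      simp_rw [PowerSeries.coeff_mul, PowerSeries.coeff_X_pow, coeff_indicator, @boole_mul _ _ _ _]
      erw [@sum_ite _ _ _ _ _ (fun _ => Classical.propDecidable _), sum_ite]
      simp_rw [@filter_filter _ _ _ _ _, sum_const_zero, add_zero, sum_const, nsmul_eq_mul, mul_one,
        sub_eq_iff_eq_add, zero_add]
      symm
      split_ifs with h
      · suffices #{a ∈ antidiagonal (n + 1) | i + 1 ∣ a.fst ∧ a.snd = i + 1} = 1 by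
          simp only [Set.mem_setOf_eq]; convert congr_arg ((↑) : ℕ → α) this; norm_cast
        rw [card_eq_one]
        cases' h with p hp
        refine ⟨((i + 1) * (p - 1), i + 1), ?_⟩
        ext ⟨a₁, a₂⟩
        simp only [mem_filter, Prod.mk_inj, HasAntidiagonal.mem_antidiagonal, mem_singleton]
        constructor
        · rintro ⟨a_left, ⟨a, rfl⟩, rfl⟩
          refine ⟨?_, rfl⟩
          rw [Nat.mul_sub_left_distrib, ← hp, ← a_left, mul_one, Nat.add_sub_cancel]
        · rintro ⟨rfl, rfl⟩
          match p with
          | 0 => rw [mul_zero] at hp; cases hp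
          | p + 1 => rw [hp]; simp [mul_add]
      · suffices #{a ∈ antidiagonal (n + 1) | i + 1 ∣ a.fst ∧ a.snd = i + 1} = 0 by
          simp only [Set.mem_setOf_eq]; convert congr_arg ((↑) : ℕ → α) this; norm_cast
        rw [card_eq_zero]
        apply eq_empty_of_forall_notMem
        simp only [Prod.forall, mem_filter, not_and, HasAntidiagonal.mem_antidiagonal]
        rintro _ h₁ h₂ ⟨a, rfl⟩ rfl
        apply h
        simp [← h₂]
  · simp [zero_pow]

open Finset.HasAntidiagonal

-- The main workhorse (verbatim from the Archive).
theorem partialGF_prop (α : Type*) [CommSemiring α] (n : ℕ) (s : Finset ℕ) (hs : ∀ i ∈ s, 0 < i)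
    (c : ℕ → Set ℕ) (hc : ∀ i, i ∉ s → 0 ∈ c i) :
    #{p : n.Partition | (∀ j, p.parts.count j ∈ c j) ∧ ∀ j ∈ p.parts, j ∈ s} =
      coeff n (∏ i ∈ s, indicatorSeries α ((· * i) '' c i)) := by
  simp_rw [PowerSeries.coeff_prod, coeff_indicator, prod_boole, sum_boole]
  apply congr_arg
  simp only [mem_univ, forall_true_left, not_and, not_forall, exists_prop,
    Set.mem_image, not_exists]
  set φ : (a : Nat.Partition n) →
    a ∈ filter (fun p ↦ (∀ (j : ℕ), Multiset.count j p.parts ∈ c j) ∧ ∀ j ∈ p.parts, j ∈ s) univ →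
    ℕ →₀ ℕ := fun p _ => {
      toFun := fun i => Multiset.count i p.parts • i
      support := Finset.filter (fun i => i ≠ 0) p.parts.toFinset
      mem_support_toFun := fun a => by
        simp only [smul_eq_mul, ne_eq, mul_eq_zero, Multiset.count_eq_zero]
        rw [not_or, not_not]
        simp only [Multiset.mem_toFinset, not_not, mem_filter] }
  refine Finset.card_bij φ ?_ ?_ ?_
  · intro a ha
    simp only [φ, not_forall, not_exists, not_and, exists_prop, mem_filter]
    rw [mem_finsuppAntidiag]
    dsimp only [ne_eq, smul_eq_mul, id_eq, eq_mpr_eq_cast, le_eq_subset, Finsupp.coe_mk]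
    simp only [mem_univ, forall_true_left, not_and, not_forall, exists_prop,
      mem_filter, true_and] at ha
    refine ⟨⟨?_, fun i ↦ ?_⟩, fun i _ ↦ ⟨a.parts.count i, ha.1 i, rfl⟩⟩
    · conv_rhs => simp [← a.parts_sum]
      rw [sum_multiset_count_of_subset _ s]
      · simp only [smul_eq_mul]
      · intro i
        simp only [Multiset.mem_toFinset, not_not, mem_filter]
        apply ha.2
    · simp only [ne_eq, Multiset.mem_toFinset, not_not, mem_filter, and_imp]
      exact fun hi _ ↦ ha.2 i hi
  · intro p₁ hp₁ p₂ hp₂ h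
    apply Nat.Partition.ext
    simp only [true_and, mem_univ, mem_filter] at hp₁ hp₂
    ext i
    simp only [φ, ne_eq, Multiset.mem_toFinset, not_not, smul_eq_mul, Finsupp.mk.injEq] at h
    by_cases hi : i = 0
    · rw [hi]
      rw [Multiset.count_eq_zero_of_notMem]
      · rw [Multiset.count_eq_zero_of_notMem]
        intro a; exact Nat.lt_irrefl 0 (hs 0 (hp₂.2 0 a))
      intro a; exact Nat.lt_irrefl 0 (hs 0 (hp₁.2 0 a))
    · rw [← mul_left_inj' hi]
      rw [funext_iff] at h
      exact h.2 i
  · simp only [φ, mem_filter, mem_finsuppAntidiag, mem_univ, exists_prop, true_and, and_assoc]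
    rintro f ⟨hf, hf₃, hf₄⟩
    have hf' : f ∈ finsuppAntidiag s n := mem_finsuppAntidiag.mpr ⟨hf, hf₃⟩
    simp only [mem_finsuppAntidiag] at hf'
    refine ⟨⟨∑ i ∈ s, Multiset.replicate (f i / i) i, ?_, ?_⟩, ?_, ?_, ?_⟩
    · intro i hi
      simp only [exists_prop, Multiset.mem_sum, mem_map, Function.Embedding.coeFn_mk] at hi
      rcases hi with ⟨t, ht, z⟩
      apply hs
      rwa [Multiset.eq_of_mem_replicate z]
    · simp_rw [Multiset.sum_sum, Multiset.sum_replicate, Nat.nsmul_eq_mul]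
      rw [← hf'.1]
      refine sum_congr rfl fun i hi => Nat.div_mul_cancel ?_
      rcases hf₄ i hi with ⟨w, _, hw₂⟩
      rw [← hw₂]
      exact dvd_mul_left _ _
    · intro i
      simp_rw [Multiset.count_sum', Multiset.count_replicate, sum_ite_eq']
      split_ifs with h
      · rcases hf₄ i h with ⟨w, hw₁, hw₂⟩
        rwa [← hw₂, Nat.mul_div_cancel _ (hs i h)]
      · exact hc _ h
    · intro i hi
      rw [Multiset.mem_sum] at hi
      rcases hi with ⟨j, hj₁, hj₂⟩
      rwa [Multiset.eq_of_mem_replicate hj₂]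
    · ext i
      simp_rw [Multiset.count_sum', Multiset.count_replicate, sum_ite_eq']
      simp only [ne_eq, Multiset.mem_toFinset, not_not, smul_eq_mul, ite_mul,
        zero_mul, Finsupp.coe_mk]
      split_ifs with h
      · apply Nat.div_mul_cancel
        rcases hf₄ i h with ⟨w, _, hw₂⟩
        apply Dvd.intro_left _ hw₂
      · apply symm
        rw [← Finsupp.notMem_support_iff]
        exact notMem_mono hf'.2 h

/-- If `m` is big enough, the partial product's coefficient counts all partitions. -/
theorem partition_coeff [Field α] (N m : ℕ) (h : N < m) :
    (Fintype.card (Nat.Partition N) : α) =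
      coeff N (∏ i ∈ range m, (1 - (X : PowerSeries α) ^ (i + 1))⁻¹) := by
  have hprop := partialGF_prop α N ((range m).map ⟨Nat.succ, Nat.succ_injective⟩)
    (fun i hi => by
      simp only [mem_map, Function.Embedding.coeFn_mk, mem_range] at hi
      obtain ⟨a, -, rfl⟩ := hi
      exact Nat.succ_pos a)
    (fun _ => Set.univ) (fun _ _ => trivial)
  rw [Finset.prod_map] at hprop
  have heq : ∀ i : ℕ, indicatorSeries α ((· * (Function.Embedding.mk Nat.succ Nat.succ_injective i)) '' Set.univ)
      = (1 - (X : PowerSeries α) ^ (i + 1))⁻¹ := by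
    intro i
    rw [num_series']
    have hset : ((· * (Function.Embedding.mk Nat.succ Nat.succ_injective i)) '' Set.univ : Set ℕ)
        = {k | i + 1 ∣ k} := by
      ext k
      simp only [Set.mem_image, Set.mem_univ, true_and, Function.Embedding.coeFn_mk,
        Set.mem_setOf_eq, Nat.succ_eq_add_one]
      constructor
      · rintro ⟨p, rfl⟩
        exact ⟨p, mul_comm _ _⟩
      · rintro ⟨p, rfl⟩
        exact ⟨p, mul_comm _ _⟩
    rw [hset]
  simp_rw [heq] at hprop
  rw [← hprop]
  norm_cast
  have htrue : ∀ p : Nat.Partition N,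
      (∀ j, Multiset.count j p.parts ∈ (Set.univ : Set ℕ)) ∧
        ∀ j ∈ p.parts, j ∈ (range m).map ⟨Nat.succ, Nat.succ_injective⟩ := by
    intro p
    refine ⟨fun j => trivial, fun j hj => ?_⟩
    have hj1 : 0 < j := p.parts_pos hj
    have hjN : j ≤ N := by
      simpa [p.parts_sum] using Multiset.single_le_sum (fun _ _ => Nat.zero_le _) _ hj
    simp only [mem_map, Function.Embedding.coeFn_mk, mem_range]
    exact ⟨j - 1, by omega, by omega⟩
  rw [Finset.filter_true_of_mem (fun p _ => htrue p), Finset.card_univ]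

end PS

/-! ### Specialization mod 5 -/

section Mod5

open PowerSeries

instance fact_prime_5 : Fact (Nat.Prime 5) := ⟨by norm_num⟩

abbrev K := ZMod 5

/-- the truncated Euler product over `K` -/
def FK (m : ℕ) : PowerSeries K := ∏ i ∈ range m, (1 - (X : PowerSeries K) ^ (i + 1))

/-- its inverse, the truncated partition generating function -/
def PK (m : ℕ) : PowerSeries K := ∏ i ∈ range m, (1 - (X : PowerSeries K) ^ (i + 1))⁻¹

/-- the truncated Euler product in `X^5` -/
def GK (m : ℕ) : PowerSeries K := ∏ i ∈ range m, (1 - (X : PowerSeries K) ^ (5 * (i + 1)))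

lemma FK_mul_PK (m : ℕ) : FK m * PK m = 1 := by
  rw [FK, PK, ← Finset.prod_mul_distrib]
  apply Finset.prod_eq_one
  intro i _
  apply PowerSeries.mul_inv_cancel
  simp

lemma five_eq_zero : (5 : PowerSeries K) = 0 := by
  rw [← map_ofNat (PowerSeries.C (R := K)) 5, show (5 : K) = 0 from rfl, map_zero]

lemma FK_pow_five (m : ℕ) : FK m ^ 5 = GK m := by
  rw [FK, GK, ← Finset.prod_pow]
  apply Finset.prod_congr rfl
  intro i _
  have h5 := five_eq_zero
  have hxp : (X : PowerSeries K) ^ (5 * (i + 1)) = ((X : PowerSeries K) ^ (i + 1)) ^ 5 := by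
    rw [← pow_mul, mul_comm]
  rw [hxp]
  set x : PowerSeries K := (X : PowerSeries K) ^ (i + 1) with hx
  linear_combination (- x + 2 * x ^ 2 - 2 * x ^ 3 + x ^ 4) * h5

lemma GK_coeff_not_dvd {m v : ℕ} (h : ¬ 5 ∣ v) : coeff v (GK m) = 0 := by
  rw [GK]
  induction m generalizing v with
  | zero =>
      rw [Finset.prod_range_zero, PowerSeries.coeff_one, if_neg]
      rintro rfl
      exact h ⟨0, rfl⟩
  | succ m ih =>
      rw [Finset.prod_range_succ, mul_sub, mul_one, map_sub, ih h,
        PowerSeries.coeff_mul_X_pow', zero_sub, neg_eq_zero]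
      split_ifs with hle
      · exact ih (by omega)
      · rfl

lemma GK_coeff_zero (m : ℕ) : constantCoeff (GK m) = 1 := by
  rw [GK, map_prod]
  apply Finset.prod_eq_one
  intro i _
  simp

/-- coefficients of `FK ^ 3` are the (mod 5) coefficients of `E m ^ 3` -/
lemma FK_cube_coeff (m N : ℕ) : coeff N (FK m ^ 3) = (((E m ^ 3).coeff N : ℤ) : K) := by
  have hcoce : FK m = ((E m).map (Int.castRingHom K) : Polynomial K) := by
    rw [FK, E, Polynomial.map_prod, ← Polynomial.coeToPowerSeries.ringHom_apply, map_prod]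
    apply Finset.prod_congr rfl
    intro i _
    simp [Polynomial.coeToPowerSeries.ringHom_apply]
  rw [hcoce, ← Polynomial.coe_pow, Polynomial.coeff_coe, ← Polynomial.map_pow,
    Polynomial.coeff_map]
  rfl

lemma PK_sq_coeff {m M : ℕ} (h : M < m) :
    coeff M (PK m * PK m) = (coloredPartitions 2 M : K) := by
  rw [PowerSeries.coeff_mul]
  have hcp : (coloredPartitions 2 M : K) = ∑ p ∈ antidiagonal M,
      (Fintype.card (Nat.Partition p.1) : K) * (Fintype.card (Nat.Partition p.2) : K) := by
    rw [coloredPartitions, Finset.Nat.antidiagonalTuple_two, Finset.sum_map]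
    push_cast
    apply Finset.sum_congr rfl
    intro p _
    rw [show ∏ i, (Fintype.card (Nat.Partition ((piFinTwoEquiv fun _ => ℕ).symm.toEmbedding p i)) : K)
        = (Fintype.card (Nat.Partition p.1) : K) * (Fintype.card (Nat.Partition p.2) : K) from by
      rw [Fin.prod_univ_two]; rfl]
  rw [hcp]
  apply Finset.sum_congr rfl
  intro p hp
  rw [Finset.HasAntidiagonal.mem_antidiagonal] at hp
  rw [PK, ← partition_coeff p.1 m (by omega), ← partition_coeff p.2 m (by omega)]

set_option maxHeartbeats 2000000 in
theorem key (n : ℕ) : ((coloredPartitions 2 (5 * n + 2) : K)) = 0 := by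
  induction n using Nat.strong_induction_on with
  | _ n ih =>
    set m := 5 * n + 3 with hm
    have h0 : coeff (5 * n + 2) (FK m ^ 3) = 0 := by
      rw [FK_cube_coeff, jacobi_support (by omega) (fun k => not_triangular n k)]
      simp
    have hfact : PK m * PK m * GK m = FK m ^ 3 := by
      rw [← FK_pow_five]
      have h1 := FK_mul_PK m
      calc PK m * PK m * FK m ^ 5 = (FK m * PK m) * ((FK m * PK m) * FK m ^ 3) := by ring
        _ = FK m ^ 3 := by rw [h1, one_mul, one_mul]
    have heq : coeff (5 * n + 2) (PK m * PK m * GK m) = 0 := by rw [hfact]; exact h0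
    rw [PowerSeries.coeff_mul] at heq
    have hsingle : ∑ p ∈ antidiagonal (5 * n + 2), coeff p.1 (PK m * PK m) * coeff p.2 (GK m)
        = coeff (5 * n + 2) (PK m * PK m) * coeff 0 (GK m) := by
      apply Finset.sum_eq_single_of_mem ((5 * n + 2 : ℕ), (0 : ℕ))
      · simp
      · rintro ⟨u, v⟩ hmem hne
        rw [Finset.HasAntidiagonal.mem_antidiagonal] at hmem
        simp only at hmem ⊢
        by_cases hdvd : 5 ∣ v
        · obtain ⟨j, rfl⟩ := hdvd
          rcases Nat.eq_zero_or_pos j with rfl | hj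
          · exfalso
            apply hne
            have huu : u = 5 * n + 2 := by omega
            rw [huu]
          · have hu : u = 5 * (n - j) + 2 := by omega
            rw [hu, PK_sq_coeff (by omega), ih (n - j) (by omega), zero_mul]
        · rw [GK_coeff_not_dvd hdvd, mul_zero]
    rw [hsingle, PK_sq_coeff (by omega), PowerSeries.coeff_zero_eq_constantCoeff,
      GK_coeff_zero, mul_one] at heq
    exact heq

end Mod5

end

end P2Aux

theorem p2_5n2 (n : ℕ) :
    coloredPartitions (2) (5 * n + 2) ≡ 0 [MOD 5] := by
  have h := P2Aux.key n
  rw [ZMod.natCast_eq_zero_iff] at h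
  exact (Nat.modEq_zero_iff_dvd).mpr h
end

section
/- For all integers n ≥ 0, p_{-2}(5n+3) ≡ 0 (mod 5). -/
noncomputable section
namespace P253
open Polynomial Finset
open scoped Classical

abbrev R := ZMod 5

/-- partial Euler product ∏_{i=1}^n (1 - X^i) -/
def E : ℕ → R[X]
  | 0 => 1
  | n+1 => E n * (1 - X^(n+1))

@[simp] lemma E_zero : E 0 = 1 := rfl
lemma E_succ (n : ℕ) : E (n+1) = E n * (1 - X^(n+1)) := rfl

/-- Gaussian binomial `[a+b choose a]_q` -/
def G : ℕ → ℕ → R[X]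
  | 0, _ => 1
  | _+1, 0 => 1
  | a+1, b+1 => G (a+1) b + X^(b+1) * G a (b+1)

@[simp] lemma G_zero_left (b : ℕ) : G 0 b = 1 := by cases b <;> simp [G]
@[simp] lemma G_zero_right (a : ℕ) : G a 0 = 1 := by cases a <;> simp [G]
lemma G_succ (a b : ℕ) : G (a+1) (b+1) = G (a+1) b + X^(b+1) * G a (b+1) := by
  rw [G]

lemma G_geom_right : ∀ b, (1 - X) * G 1 b = 1 - X^(b+1)
  | 0 => by simp
  | b+1 => by
    have h := G_geom_right b
    rw [G_succ 0 b]
    simp only [G_zero_left, mul_one]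
    linear_combination h

lemma G_geom_left : ∀ a, (1 - X) * G a 1 = 1 - X^(a+1)
  | 0 => by simp
  | a+1 => by
    have h := G_geom_left a
    show (1 - X) * G (a+1) (0+1) = 1 - X^(a+1+1)
    rw [G_succ a 0]
    simp only [G_zero_right, mul_one, zero_add]
    linear_combination (X : R[X]) * h

lemma G_ABS : ∀ a b, (1 - X^(a+1)) * G (a+1) b = (1 - X^(b+1)) * G a (b+1)
  | 0, b => by
    have := G_geom_right b
    simp only [G_zero_left] at this ⊢
    rw [pow_one]
    linear_combination this
  | a+1, 0 => by
    have h := G_geom_left (a+1)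
    show (1 - X^(a+1+1)) * G (a+1+1) 0 = (1 - X^(0+1)) * G (a+1) 1
    simp only [G_zero_right, mul_one, zero_add, pow_one]
    linear_combination -h
  | a+1, b+1 => by
    have e1 := G_succ (a+1) b
    have e2 := G_succ a (b+1)
    have r1 := G_ABS (a+1) b
    have r2 := G_ABS a (b+1)
    linear_combination (1 - (X:R[X])^(a+1+1)) * e1 - (1 - (X:R[X])^(b+1+1)) * e2
      + r1 + (X:R[X])^(b+1+1) * r2

lemma G_symm : ∀ a b, G a b = G b a
  | 0, b => by simp
  | a+1, 0 => by simp
  | a+1, b+1 => by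
    have e1 := G_succ a b
    have e2 := G_succ b a
    have s1 := G_symm (a+1) b
    have s2 := G_symm a (b+1)
    have r := G_ABS a b
    linear_combination e1 - e2 + r + (X:R[X])^(a+1) * s1 + s2

lemma G_pascal2 (a b : ℕ) : G (a+1) (b+1) = G a (b+1) + X^(a+1) * G (a+1) b := by
  rw [G_symm (a+1) (b+1), G_succ b a, G_symm (b+1) a, G_symm b (a+1)]

/-- product formula: E a * E b * G a b = E (a+b) -/
lemma G_prod : ∀ a b, E a * E b * G a b = E (a+b)
  | 0, b => by simp
  | a+1, 0 => by simp
  | a+1, b+1 => by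
    have e1 := G_succ a b
    have r1 := G_prod (a+1) b
    have r2 := G_prod a (b+1)
    have ea : E (a+1) = E a * (1 - X^(a+1)) := rfl
    have eb : E (b+1) = E b * (1 - X^(b+1)) := rfl
    have et : E (a+1+(b+1)) = E (a+1+b) * (1 - X^(a+1+b+1)) := rfl
    have et2 : E (a+(b+1)) = E (a+1+b) := by rw [show a+(b+1) = a+1+b by omega]
    rw [et2] at r2
    rw [et]
    linear_combination (E (a+1) * E (b+1)) * e1 + (1 - (X:R[X])^(b+1)) * r1
      + (X:R[X])^(b+1) * (1 - (X:R[X])^(a+1)) * r2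
      + (E (a+1) * G (a+1) b) * eb + ((X:R[X])^(b+1) * E (b+1) * G a (b+1)) * ea

/-- padded Gaussian binomial `[m choose r]_q`, zero if `r > m`. -/
def qb (m r : ℕ) : R[X] := if r ≤ m then G r (m - r) else 0

lemma qb_of_lt {m r : ℕ} (h : m < r) : qb m r = 0 := by
  rw [qb, if_neg (by omega)]

lemma qb_eq_G {m r : ℕ} (h : r ≤ m) : qb m r = G r (m - r) := by
  rw [qb, if_pos h]

@[simp] lemma qb_zero (m : ℕ) : qb m 0 = 1 := by
  rw [qb_eq_G (Nat.zero_le m), G_zero_left]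

@[simp] lemma qb_self (m : ℕ) : qb m m = 1 := by
  rw [qb_eq_G le_rfl, Nat.sub_self, G_zero_right]

lemma qb_pascal1 (m r : ℕ) : qb (m+1) (r+1) = qb m (r+1) + X^(m-r) * qb m r := by
  rcases lt_trichotomy r m with h | rfl | h
  · obtain ⟨d, rfl⟩ : ∃ d, m = r + 1 + d := ⟨m - r - 1, by omega⟩
    rw [qb_eq_G (by omega), qb_eq_G (by omega), qb_eq_G (by omega),
      show r+1+d+1 - (r+1) = d+1 by omega, show r+1+d - (r+1) = d by omega,
      show r+1+d - r = d+1 by omega, G_succ r d]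
  · rw [qb_self, qb_of_lt (by omega), qb_self, Nat.sub_self]
    simp
  · rw [qb_of_lt (by omega), qb_of_lt (by omega), qb_of_lt (by omega)]
    simp

lemma qb_pascal2 (m r : ℕ) : qb (m+1) (r+1) = qb m r + X^(r+1) * qb m (r+1) := by
  rcases lt_trichotomy r m with h | rfl | h
  · obtain ⟨d, rfl⟩ : ∃ d, m = r + 1 + d := ⟨m - r - 1, by omega⟩
    rw [qb_eq_G (by omega), qb_eq_G (by omega), qb_eq_G (by omega),
      show r+1+d+1 - (r+1) = d+1 by omega, show r+1+d - (r+1) = d by omega,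
      show r+1+d - r = d+1 by omega, G_pascal2 r d]
  · rw [qb_self, qb_self, qb_of_lt (show r < r+1 by omega)]
    simp
  · rw [qb_of_lt (by omega), qb_of_lt (by omega), qb_of_lt (by omega)]
    simp

lemma qb_symm_mid (n : ℕ) : qb (2*n+1) n = qb (2*n+1) (n+1) := by
  rw [qb_eq_G (by omega), qb_eq_G (by omega), show 2*n+1-n = n+1 by omega,
    show 2*n+1-(n+1) = n by omega, G_symm]

lemma qb_prod {m r : ℕ} (h : r ≤ m) : E r * E (m - r) * qb m r = E m := by
  rw [qb_eq_G h, G_prod r (m-r), Nat.add_sub_cancel' h]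

/-- the key double-Pascal recurrence -/
lemma qb_rec (n k : ℕ) (hk : k ≤ n + 1) :
    qb (2*n+3) (n+2+k) = (1 + X^(2*n+2)) * qb (2*n+1) (n+1+k)
      + X^(n+1-k) * qb (2*n+1) (n+k) + X^(n+2+k) * qb (2*n+1) (n+2+k) := by
  have h1 := qb_pascal1 (2*n+2) (n+1+k)
  rw [show 2*n+2+1 = 2*n+3 by omega, show n+1+k+1 = n+2+k by omega,
    show 2*n+2 - (n+1+k) = n+1-k by omega] at h1
  have h2 := qb_pascal2 (2*n+1) (n+1+k)
  rw [show 2*n+1+1 = 2*n+2 by omega, show n+1+k+1 = n+2+k by omega] at h2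
  have h3 := qb_pascal2 (2*n+1) (n+k)
  rw [show 2*n+1+1 = 2*n+2 by omega, show n+k+1 = n+1+k by omega] at h3
  have hpow : (X:R[X])^(n+1-k) * X^(n+1+k) = X^(2*n+2) := by
    rw [← pow_add, show n+1-k + (n+1+k) = 2*n+2 by omega]
  calc qb (2*n+3) (n+2+k) = qb (2*n+2) (n+2+k) + X^(n+1-k) * qb (2*n+2) (n+1+k) := h1
    _ = _ := by rw [h2, h3]; linear_combination (qb (2*n+1) (n+1+k)) * hpow


/-- triangular numbers -/
def T : ℕ → ℕ
  | 0 => 0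
  | k+1 => T k + (k+1)

@[simp] lemma T_zero : T 0 = 0 := rfl
lemma T_succ (k : ℕ) : T (k+1) = T k + (k+1) := rfl

/-- Jacobi coefficients -/
def a (k : ℕ) : R := (-1)^k * (2*(k:R)+1)

lemma a_zero : a 0 = 1 := by simp [a]

lemma a_rec (k : ℕ) : a (k+2) + 2 * a (k+1) + a k = 0 := by
  simp only [a]
  push_cast
  ring

lemma a_one_add : a 1 + 2 * a 0 = -1 := by
  simp only [a]
  push_cast
  norm_num

/-- finite Jacobi cube identity -/
theorem jac : ∀ n : ℕ, E n ^ 2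
    = ∑ k ∈ range (n+1), C (a k) * (X^(T k) * qb (2*n+1) (n+1+k))
  | 0 => by
    simp [a_zero]
  | n+1 => by
    have IH := jac n
    -- abbreviations
    set S0 : R[X] := ∑ k ∈ range (n+1), C (a k) * (X^(T k) * qb (2*n+1) (n+1+k)) with hS0
    -- step 1: apply qb_rec to each summand and split into three sums
    have hsplit : (∑ k ∈ range (n+2), C (a k) * (X^(T k) * qb (2*(n+1)+1) (n+1+1+k)))
        = (1 + X^(2*n+2)) * (∑ k ∈ range (n+2), C (a k) * (X^(T k) * qb (2*n+1) (n+1+k)))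
          + (∑ k ∈ range (n+2), C (a k) * ((X^(T k) * X^(n+1-k)) * qb (2*n+1) (n+k)))
          + (∑ k ∈ range (n+2), C (a k) * ((X^(T k) * X^(n+2+k)) * qb (2*n+1) (n+2+k))) := by
      rw [mul_sum, ← sum_add_distrib, ← sum_add_distrib]
      refine sum_congr rfl fun k hk => ?_
      rw [mem_range] at hk
      rw [show 2*(n+1)+1 = 2*n+3 by omega, show n+1+1+k = n+2+k by omega,
        qb_rec n k (by omega)]
      ring
    -- the full first sum equals S0 (last term vanishes)
    have hfull : (∑ k ∈ range (n+2), C (a k) * (X^(T k) * qb (2*n+1) (n+1+k))) = S0 := by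
      rw [sum_range_succ, qb_of_lt (show 2*n+1 < n+1+(n+1) by omega)]
      simp [hS0]
    -- second sum: peel k = 0 and reindex
    have hB : (∑ k ∈ range (n+2), C (a k) * ((X^(T k) * X^(n+1-k)) * qb (2*n+1) (n+k)))
        = X^(n+1) * qb (2*n+1) (n+1)
          + ∑ k ∈ range (n+1), C (a (k+1)) * (X^(T k + (n+1)) * qb (2*n+1) (n+1+k)) := by
      rw [sum_range_succ']
      have h0 : (C (a 0) * ((X^(T 0) * X^(n+1-0)) * qb (2*n+1) (n+0)) : R[X])
          = X^(n+1) * qb (2*n+1) (n+1) := by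
        simp only [a_zero, map_one, one_mul, T_zero, pow_zero, Nat.add_zero, Nat.sub_zero]
        rw [qb_symm_mid]
      rw [h0]
      rw [add_comm]
      refine congrArg (X ^ (n + 1) * qb (2 * n + 1) (n + 1) + ·) ?_
      refine sum_congr rfl fun k hk => ?_
      rw [mem_range] at hk
      rw [← pow_add, T_succ, show T k + (k+1) + (n+1-(k+1)) = T k + (n+1) by omega,
        show n+(k+1) = n+1+k by omega]
    -- third sum: last two terms vanish, reindex
    have hC : (∑ k ∈ range (n+2), C (a k) * ((X^(T k) * X^(n+2+k)) * qb (2*n+1) (n+2+k)))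
        = ∑ k ∈ range n, C (a k) * (X^(T (k+1) + (n+1)) * qb (2*n+1) (n+1+(k+1))) := by
      rw [sum_range_succ, sum_range_succ,
        qb_of_lt (show 2*n+1 < n+2+n by omega),
        qb_of_lt (show 2*n+1 < n+2+(n+1) by omega)]
      simp only [mul_zero, add_zero]
      refine sum_congr rfl fun k hk => ?_
      rw [mem_range] at hk
      rw [← pow_add, show T k + (n+2+k) = T (k+1) + (n+1) by rw [T_succ]; omega,
        show n+2+k = n+1+(k+1) by omega]
    -- X^(n+1) * S0 expanded
    have hS0X : X^(n+1) * S0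
        = ∑ k ∈ range (n+1), C (a k) * (X^(T k + (n+1)) * qb (2*n+1) (n+1+k)) := by
      rw [hS0, mul_sum]
      refine sum_congr rfl fun k hk => ?_
      rw [pow_add]
      ring
    -- the middle cancellation
    have hmid : (∑ k ∈ range (n+1), C (a (k+1)) * (X^(T k + (n+1)) * qb (2*n+1) (n+1+k)))
        + 2 * (∑ k ∈ range (n+1), C (a k) * (X^(T k + (n+1)) * qb (2*n+1) (n+1+k)))
        + (∑ k ∈ range n, C (a k) * (X^(T (k+1) + (n+1)) * qb (2*n+1) (n+1+(k+1))))
        = - (X^(n+1) * qb (2*n+1) (n+1)) := by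
      rw [mul_sum, ← sum_add_distrib]
      have h1 : (∑ k ∈ range (n+1), (C (a (k+1)) * (X^(T k + (n+1)) * qb (2*n+1) (n+1+k))
            + 2 * (C (a k) * (X^(T k + (n+1)) * qb (2*n+1) (n+1+k)))))
          = ∑ k ∈ range (n+1), C (a (k+1) + 2 * a k) * (X^(T k + (n+1)) * qb (2*n+1) (n+1+k)) := by
        refine sum_congr rfl fun k hk => ?_
        rw [map_add, map_mul, map_ofNat]
        ring
      rw [h1, sum_range_succ']
      have h2 : ∀ k ∈ range n, C (a (k+1+1) + 2 * a (k+1)) * (X^(T (k+1) + (n+1)) * qb (2*n+1) (n+1+(k+1)))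
            + C (a k) * (X^(T (k+1) + (n+1)) * qb (2*n+1) (n+1+(k+1))) = 0 := by
        intro k hk
        have := a_rec k
        rw [← add_mul, ← map_add, show a (k+1+1) + 2 * a (k+1) + a k = 0 from this, map_zero, zero_mul]
      rw [add_comm (∑ k ∈ range n, _) _, add_assoc, ← sum_add_distrib,
        sum_eq_zero h2, add_zero]
      rw [show a (0+1) + 2 * a 0 = -1 from a_one_add]
      simp [T_zero]
    -- put everything together
    have hE : E (n+1) ^ 2 = E n ^ 2 * (1 - X^(n+1))^2 := by rw [E_succ]; ring
    rw [hsplit, hfull, hB, hC, hE, IH]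
    linear_combination (-2 : R[X]) * hS0X - hmid


/-- congruence modulo X^M -/
def Meq (M : ℕ) (A B : R[X]) : Prop := (X:R[X])^M ∣ A - B

lemma Meq.refl (M : ℕ) (A : R[X]) : Meq M A A := by simp [Meq]

lemma Meq.symm {M : ℕ} {A B : R[X]} (h : Meq M A B) : Meq M B A := by
  simpa [Meq] using (dvd_neg.2 h)

lemma Meq.trans {M : ℕ} {A B C : R[X]} (h1 : Meq M A B) (h2 : Meq M B C) : Meq M A C := by
  have := dvd_add h1 h2
  simpa [Meq] using this

lemma Meq.mul {M : ℕ} {A B C D : R[X]} (h1 : Meq M A B) (h2 : Meq M C D) :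
    Meq M (A * C) (B * D) := by
  have : A * C - B * D = (A - B) * C + B * (C - D) := by ring
  rw [Meq, this]
  exact dvd_add (h1.mul_right C) (h2.mul_left B)

lemma Meq.coeff {M : ℕ} {A B : R[X]} (h : Meq M A B) {i : ℕ} (hi : i < M) :
    A.coeff i = B.coeff i := by
  have := Polynomial.X_pow_dvd_iff.1 h i hi
  rw [Polynomial.coeff_sub, sub_eq_zero] at this
  exact this

lemma Meq_zero_of_dvd {M t : ℕ} (h : M ≤ t) (A : R[X]) : Meq M (X^t * A) 0 := by
  rw [Meq, sub_zero]
  exact Dvd.dvd.mul_right (pow_dvd_pow X h) A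

lemma Meq_sum {M : ℕ} {s : Finset ℕ} {f g : ℕ → R[X]}
    (h : ∀ i ∈ s, Meq M (f i) (g i)) : Meq M (∑ i ∈ s, f i) (∑ i ∈ s, g i) := by
  rw [Meq, ← Finset.sum_sub_distrib]
  exact Finset.dvd_sum h

lemma Meq_prod_one {M : ℕ} {s : Finset ℕ} {f : ℕ → R[X]}
    (h : ∀ i ∈ s, Meq M (f i) 1) : Meq M (∏ i ∈ s, f i) 1 := by
  classical
  induction s using Finset.induction_on with
  | empty => simpa using Meq.refl M 1
  | @insert x s hx ih =>
    rw [Finset.prod_insert hx]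
    have h1 := h x (Finset.mem_insert_self x s)
    have h2 := ih fun i hi => h i (Finset.mem_insert_of_mem hi)
    simpa using h1.mul h2

/-- substitution X ↦ X^5 preserves congruences -/
lemma Meq_subst {M : ℕ} {A B : R[X]} (h : Meq M A B) :
    Meq M (aeval (X^5 : R[X]) A) (aeval (X^5 : R[X]) B) := by
  obtain ⟨c, hc⟩ := h
  rw [Meq, ← map_sub, hc, map_mul, map_pow, aeval_X, ← pow_mul]
  exact Dvd.dvd.mul_right (pow_dvd_pow X (by omega)) _

/-- Frobenius: E n ^ 5 = E n (X^5) -/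
lemma E_pow5 : ∀ n : ℕ, (E n)^5 = aeval (X^5 : R[X]) (E n)
  | 0 => by simp
  | n+1 => by
    have IH := E_pow5 n
    have hchar : ((1 : R[X]) - X^(n+1))^5 = 1 - (X^(n+1))^5 := by
      haveI : Fact (Nat.Prime 5) := ⟨by norm_num⟩
      rw [sub_pow_char (p := 5) (1 : R[X]) (X^(n+1)), one_pow]
    rw [E_succ, mul_pow, IH, hchar, map_mul, map_sub, map_one, map_pow, aeval_X]
    rw [← pow_mul, ← pow_mul, Nat.mul_comm 5 (n+1)]

/-- E N as a product over Icc -/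
lemma E_eq_prod (N : ℕ) : E N = ∏ i ∈ Finset.Icc 1 N, (1 - (X:R[X])^i) := by
  induction N with
  | zero => simp
  | succ n ih =>
    rw [← Finset.insert_Icc_right_eq_Icc_add_one (by omega),
      Finset.prod_insert (by simp), E_succ, ih]
    ring

lemma two_T (k : ℕ) : 2 * T k = k * (k+1) := by
  induction k with
  | zero => rfl
  | succ n ih => rw [T_succ]; ring_nf; ring_nf at ih; omega

lemma T_ge (k : ℕ) : k ≤ T k := by
  induction k with
  | zero => simp
  | succ n ih => rw [T_succ]; omega

lemma five_dvd_of_T {k m M : ℕ} (h : T k + 5 * m = 5 * M + 3) : 5 ∣ 2 * k + 1 := by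
  have h2 := two_T k
  have hK : (k * (k+1)) % 5 = 1 := by omega
  obtain ⟨q, r, hk, hr⟩ : ∃ q r, k = 5*q + r ∧ r < 5 := ⟨k/5, k%5, by omega, by omega⟩
  subst hk
  have hexp : (5*q+r) * ((5*q+r)+1) = 5*(5*q*q + q*r + q + q*r) + r*(r+1) := by ring
  rw [hexp] at hK
  interval_cases r <;> omega


section GF
open PowerSeries

/-- A convenience constructor for the power series whose coefficients indicate a subset. -/
def indicatorSeries (α : Type*) [Semiring α] (s : Set ℕ) : PowerSeries α :=
  PowerSeries.mk fun n => if n ∈ s then 1 else 0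

theorem coeff_indicator (s : Set ℕ) [Semiring α] (n : ℕ) :
    coeff (R := α) n (indicatorSeries _ s) = if n ∈ s then 1 else 0 :=
  coeff_mk _ _

theorem coeff_indicator_pos (s : Set ℕ) [Semiring α] (n : ℕ) (h : n ∈ s) :
    coeff (R := α) n (indicatorSeries _ s) = 1 := by rw [coeff_indicator, if_pos h]

theorem coeff_indicator_neg (s : Set ℕ) [Semiring α] (n : ℕ) (h : n ∉ s) :
    coeff (R := α) n (indicatorSeries _ s) = 0 := by rw [coeff_indicator, if_neg h]

theorem constantCoeff_indicator (s : Set ℕ) [Semiring α] :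
    constantCoeff (R := α) (indicatorSeries _ s) = if 0 ∈ s then 1 else 0 :=
  rfl

-- The main workhorse of the partition theorem proof.
theorem partialGF_prop (α : Type*) [CommSemiring α] (n : ℕ) (s : Finset ℕ) (hs : ∀ i ∈ s, 0 < i)
    (c : ℕ → Set ℕ) (hc : ∀ i, i ∉ s → 0 ∈ c i) :
    #{p : n.Partition | (∀ j, p.parts.count j ∈ c j) ∧ ∀ j ∈ p.parts, j ∈ s} =
      coeff (R := α) n (∏ i ∈ s, indicatorSeries α ((· * i) '' c i)) := by
  simp_rw [coeff_prod, coeff_indicator, prod_boole, sum_boole]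
  apply congr_arg
  simp only [mem_univ, forall_true_left, not_and, not_forall, exists_prop,
    Set.mem_image, not_exists]
  set φ : (a : Nat.Partition n) →
    a ∈ filter (fun p ↦ (∀ (j : ℕ), Multiset.count j p.parts ∈ c j) ∧ ∀ j ∈ p.parts, j ∈ s) univ →
    ℕ →₀ ℕ := fun p _ => {
      toFun := fun i => Multiset.count i p.parts • i
      support := Finset.filter (fun i => i ≠ 0) p.parts.toFinset
      mem_support_toFun := fun a => by
        simp only [smul_eq_mul, ne_eq, mul_eq_zero, Multiset.count_eq_zero]
        rw [not_or, not_not]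
        simp only [Multiset.mem_toFinset, not_not, mem_filter] }
  refine Finset.card_bij φ ?_ ?_ ?_
  · intro a ha
    simp only [φ, not_forall, not_exists, not_and, exists_prop, mem_filter]
    rw [mem_finsuppAntidiag]
    dsimp only [ne_eq, smul_eq_mul, id_eq, eq_mpr_eq_cast, le_eq_subset, Finsupp.coe_mk]
    simp only [mem_univ, forall_true_left, not_and, not_forall, exists_prop,
      mem_filter, true_and] at ha
    refine ⟨⟨?_, fun i ↦ ?_⟩, fun i _ ↦ ⟨a.parts.count i, ha.1 i, rfl⟩⟩
    · conv_rhs => simp [← a.parts_sum]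
      rw [sum_multiset_count_of_subset _ s]
      · simp only [smul_eq_mul]
      · intro i
        simp only [Multiset.mem_toFinset, not_not, mem_filter]
        apply ha.2
    · simp only [ne_eq, Multiset.mem_toFinset, not_not, mem_filter, and_imp]
      exact fun hi _ ↦ ha.2 i hi
  · intro p₁ hp₁ p₂ hp₂ h
    apply Nat.Partition.ext
    simp only [true_and, mem_univ, mem_filter] at hp₁ hp₂
    ext i
    simp only [φ, ne_eq, Multiset.mem_toFinset, not_not, smul_eq_mul, Finsupp.mk.injEq] at h
    by_cases hi : i = 0
    · rw [hi]
      rw [Multiset.count_eq_zero_of_notMem]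
      · rw [Multiset.count_eq_zero_of_notMem]
        intro a; exact Nat.lt_irrefl 0 (hs 0 (hp₂.2 0 a))
      intro a; exact Nat.lt_irrefl 0 (hs 0 (hp₁.2 0 a))
    · rw [← mul_left_inj' hi]
      rw [funext_iff] at h
      exact h.2 i
  · simp only [φ, mem_filter, mem_finsuppAntidiag, mem_univ, exists_prop, true_and, and_assoc]
    rintro f ⟨hf, hf₃, hf₄⟩
    have hf' : f ∈ finsuppAntidiag s n := mem_finsuppAntidiag.mpr ⟨hf, hf₃⟩
    simp only [mem_finsuppAntidiag] at hf'
    refine ⟨⟨∑ i ∈ s, Multiset.replicate (f i / i) i, ?_, ?_⟩, ?_, ?_, ?_⟩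
    · intro i hi
      simp only [exists_prop, Multiset.mem_sum, mem_map, Function.Embedding.coeFn_mk] at hi
      rcases hi with ⟨t, ht, z⟩
      apply hs
      rwa [Multiset.eq_of_mem_replicate z]
    · simp_rw [Multiset.sum_sum, Multiset.sum_replicate, Nat.nsmul_eq_mul]
      rw [← hf'.1]
      refine sum_congr rfl fun i hi => Nat.div_mul_cancel ?_
      rcases hf₄ i hi with ⟨w, _, hw₂⟩
      rw [← hw₂]
      exact dvd_mul_left _ _
    · intro i
      simp_rw [Multiset.count_sum', Multiset.count_replicate, sum_ite_eq']
      split_ifs with h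
      · rcases hf₄ i h with ⟨w, hw₁, hw₂⟩
        rwa [← hw₂, Nat.mul_div_cancel _ (hs i h)]
      · exact hc _ h
    · intro i hi
      rw [Multiset.mem_sum] at hi
      rcases hi with ⟨j, hj₁, hj₂⟩
      rwa [Multiset.eq_of_mem_replicate hj₂]
    · ext i
      simp_rw [Multiset.count_sum', Multiset.count_replicate, sum_ite_eq']
      simp only [ne_eq, Multiset.mem_toFinset, not_not, smul_eq_mul, ite_mul,
        zero_mul, Finsupp.coe_mk]
      split_ifs with h
      · apply Nat.div_mul_cancel
        rcases hf₄ i h with ⟨w, _, hw₂⟩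
        apply Dvd.intro_left _ hw₂
      · apply symm
        rw [← Finsupp.notMem_support_iff]
        exact notMem_mono hf'.2 h


/-- The truncated partition generating function as a polynomial. -/
def Qpoly (N : ℕ) : R[X] := ∏ i ∈ Finset.Icc 1 N, (∑ j ∈ range (N+1), (X:R[X])^(j*i))

lemma indicator_eq_poly {N i : ℕ} (hi : 1 ≤ i) :
    indicatorSeries R ((· * i) '' {j | j ≤ N})
      = ((∑ j ∈ range (N+1), (X:R[X])^(j*i) : R[X]) : PowerSeries R) := by
  ext d
  rw [coeff_indicator, Polynomial.coeff_coe, finset_sum_coeff]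
  simp_rw [Polynomial.coeff_X_pow]
  by_cases hd : ∃ j, j ≤ N ∧ j * i = d
  · obtain ⟨j0, hj0, hj0d⟩ := hd
    rw [if_pos ⟨j0, hj0, hj0d⟩, Finset.sum_eq_single j0]
    · rw [if_pos hj0d.symm]
    · intro j hj hne
      rw [if_neg]
      intro hcon
      exact hne (Nat.eq_of_mul_eq_mul_right (by omega) (hj0d.trans hcon).symm)
    · intro hcon
      exact absurd (mem_range.2 (by omega)) hcon
  · rw [if_neg (by simpa using hd), Finset.sum_eq_zero]
    intro j hj
    rw [mem_range] at hj
    rw [if_neg]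
    intro hcon
    exact hd ⟨j, by omega, hcon.symm⟩

lemma card_eq_coeff {N n : ℕ} (hn : n ≤ N) :
    ((Fintype.card (Nat.Partition n) : R)) = (Qpoly N).coeff n := by
  have hGF := partialGF_prop R n (Finset.Icc 1 N)
    (fun i hi => (Finset.mem_Icc.1 hi).1) (fun _ => {j | j ≤ N}) (fun i _ => Nat.zero_le N)
  have hfilt : ({p : n.Partition | (∀ j, p.parts.count j ∈ {j' | j' ≤ N}) ∧
      ∀ j ∈ p.parts, j ∈ Finset.Icc 1 N} : Finset (n.Partition))
      = Finset.univ := by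
    apply Finset.eq_univ_of_forall
    intro p
    simp only [Set.mem_setOf_eq, Finset.mem_filter, Finset.mem_univ, true_and, Finset.mem_Icc]
    constructor
    · intro j
      have h1 : p.parts.count j ≤ Multiset.card p.parts := Multiset.count_le_card _ _
      have h2 : Multiset.card p.parts • 1 ≤ p.parts.sum :=
        Multiset.card_nsmul_le_sum (fun x hx => p.parts_pos hx)
      have h3 := p.parts_sum
      simp only [smul_eq_mul, mul_one] at h2
      omega
    · intro j hj
      refine ⟨p.parts_pos hj, ?_⟩
      have := Multiset.le_sum_of_mem hj
      rw [p.parts_sum] at this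
      omega
  rw [hfilt, Finset.card_univ] at hGF
  rw [hGF]
  have hprod : (∏ i ∈ Finset.Icc 1 N, indicatorSeries R ((· * i) '' {j | j ≤ N}))
      = ((Qpoly N : R[X]) : PowerSeries R) := by
    rw [Qpoly, ← Polynomial.coeToPowerSeries.ringHom_apply, map_prod]
    refine Finset.prod_congr rfl fun i hi => ?_
    rw [indicator_eq_poly (Finset.mem_Icc.1 hi).1, Polynomial.coeToPowerSeries.ringHom_apply]
  rw [hprod, Polynomial.coeff_coe]


end GF

section Assembly

/-- partition numbers in `R` -/
def pp (m : ℕ) : R := (Fintype.card (Nat.Partition m) : R)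

/-- truncated partition generating function -/
def P (N : ℕ) : R[X] := ∑ m ∈ range (N+1), C (pp m) * X^m

lemma P_coeff {N i : ℕ} (hi : i ≤ N) : (P N).coeff i = pp i := by
  rw [P, finset_sum_coeff]
  rw [Finset.sum_eq_single i]
  · simp
  · intro m hm hne
    rw [Polynomial.coeff_C_mul, Polynomial.coeff_X_pow, if_neg (fun h => hne h.symm), mul_zero]
  · intro hcon
    exact absurd (mem_range.2 (by omega)) hcon

lemma E_down {N : ℕ} : ∀ {m : ℕ}, N ≤ m → Meq (N+1) (E m) (E N) := by
  intro m h
  induction m with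
  | zero =>
    have : N = 0 := by omega
    subst this
    exact Meq.refl _ _
  | succ m ih =>
    rcases Nat.eq_or_lt_of_le h with heq | hlt
    · subst heq
      exact Meq.refl _ _
    · have hNm : N ≤ m := by omega
      have h1 : Meq (N+1) (E (m+1)) (E m) := by
        rw [Meq, E_succ]
        have hh : E m * (1 - X^(m+1)) - E m = -(X^(m+1) * E m) := by ring
        rw [hh, dvd_neg]
        exact (pow_dvd_pow X (by omega)).mul_right _
      exact h1.trans (ih hNm)

lemma EulerQ (N : ℕ) : Meq (N+1) (E N * Qpoly N) 1 := by
  rw [E_eq_prod, Qpoly, ← Finset.prod_mul_distrib]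
  apply Meq_prod_one
  intro i hi
  rw [Finset.mem_Icc] at hi
  have hgeom : ((1:R[X]) - X^i) * (∑ j ∈ range (N+1), (X:R[X])^(j*i))
      = 1 - X^(i*(N+1)) := by
    have hg := geom_sum_mul (X^i : R[X]) (N+1)
    simp_rw [← pow_mul] at hg
    have hsum : (∑ j ∈ range (N+1), (X:R[X])^(i*j)) = ∑ j ∈ range (N+1), (X:R[X])^(j*i) := by
      refine Finset.sum_congr rfl fun j _ => by rw [Nat.mul_comm]
    rw [hsum] at hg
    linear_combination -hg
  rw [hgeom, Meq]
  have : (1:R[X]) - X^(i*(N+1)) - 1 = -(X^(i*(N+1))) := by ring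
  rw [this, dvd_neg]
  exact pow_dvd_pow X (by nlinarith [hi.1])

lemma QP (N : ℕ) : Meq (N+1) (Qpoly N) (P N) := by
  rw [Meq]
  rw [Polynomial.X_pow_dvd_iff]
  intro d hd
  rw [Polynomial.coeff_sub, P_coeff (by omega), ← card_eq_coeff (by omega : d ≤ N), pp, sub_self]

lemma EP (N : ℕ) : Meq (N+1) (E N * P N) 1 :=
  (((Meq.refl _ (E N)).mul (QP N)).symm).trans (EulerQ N)

lemma EmulP {N m : ℕ} (h : N ≤ m) : Meq (N+1) (E m * P N) 1 :=
  ((E_down h).mul (Meq.refl _ (P N))).trans (EP N)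

lemma qb_P (N k : ℕ) (hk : k ≤ N) : Meq (N+1) (qb (4*N+3) (2*N+2+k)) (P N) := by
  have hprod := qb_prod (m := 4*N+3) (r := 2*N+2+k) (by omega)
  rw [show 4*N+3 - (2*N+2+k) = 2*N+1-k by omega] at hprod
  set B := qb (4*N+3) (2*N+2+k) with hB
  have ha : Meq (N+1) (E (2*N+2+k) * P N) 1 := EmulP (by omega)
  have hb : Meq (N+1) (E (2*N+1-k) * P N) 1 := EmulP (by omega)
  have hc : Meq (N+1) (E (4*N+3) * P N) 1 := EmulP (by omega)
  have h1 : Meq (N+1) (B * ((E (2*N+2+k) * P N) * (E (2*N+1-k) * P N))) (B * (1*1)) :=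
    (Meq.refl _ B).mul (ha.mul hb)
  have h2 : B * ((E (2*N+2+k) * P N) * (E (2*N+1-k) * P N)) = (E (4*N+3) * P N) * P N := by
    rw [← hprod]; ring
  have h3 : Meq (N+1) ((E (4*N+3) * P N) * P N) (1 * P N) := hc.mul (Meq.refl _ (P N))
  have h4 : Meq (N+1) B ((E (4*N+3) * P N) * P N) := by
    have := h1.symm
    rw [mul_one, mul_one] at this
    rw [← h2]
    exact this
  have := h4.trans h3
  rwa [one_mul] at this

/-- truncated Jacobi theta series -/
def J (N : ℕ) : R[X] := ∑ k ∈ range (2*N+2), C (a k) * X^(T k)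

lemma jacP (N : ℕ) : Meq (N+1) (E N ^ 2) (J N * P N) := by
  have hj := jac (2*N+1)
  have hle : N ≤ 2*N+1 := by omega
  have h1 : Meq (N+1) (E N ^ 2) (E (2*N+1) ^ 2) := by
    have := ((E_down hle).symm).mul ((E_down hle).symm)
    rwa [← pow_two, ← pow_two] at this
  have h2 : Meq (N+1) (∑ k ∈ range (2*N+1+1), C (a k) * (X^(T k) * qb (2*(2*N+1)+1) (2*N+1+1+k)))
      (∑ k ∈ range (2*N+1+1), C (a k) * (X^(T k) * P N)) := by
    apply Meq_sum
    intro k hk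
    by_cases hkN : k ≤ N
    · rw [show 2*(2*N+1)+1 = 4*N+3 by omega, show 2*N+1+1+k = 2*N+2+k by omega]
      exact (Meq.refl _ (C (a k))).mul ((Meq.refl _ (X^(T k))).mul (qb_P N k hkN))
    · rw [Meq]
      have hT : N + 1 ≤ T k := by have := T_ge k; omega
      have : C (a k) * (X^(T k) * qb (2*(2*N+1)+1) (2*N+1+1+k)) - C (a k) * (X^(T k) * P N)
          = X^(T k) * (C (a k) * (qb (2*(2*N+1)+1) (2*N+1+1+k) - P N)) := by ring
      rw [this]
      exact (pow_dvd_pow X hT).mul_right _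
  rw [← hj] at h2
  have h12 := h1.trans h2
  have h3 : J N * P N = ∑ k ∈ range (2*N+1+1), C (a k) * (X^(T k) * P N) := by
    rw [J, Finset.sum_mul, show 2*N+1+1 = 2*N+2 by omega]
    exact Finset.sum_congr rfl fun k _ => by ring
  rwa [← h3] at h12

/-- the central congruence: P² ≡ J·P(X⁵) mod X^(N+1) -/
lemma main (N : ℕ) :
    Meq (N+1) (P N * P N) (J N * (aeval (X^5 : R[X]) (P N))) := by
  set σP := aeval (X^5 : R[X]) (P N) with hσP
  set σE := aeval (X^5 : R[X]) (E N) with hσE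
  have hEP5 : Meq (N+1) (σE * σP) 1 := by
    have := Meq_subst (EP N)
    rwa [map_mul, map_one] at this
  have hfrob : (E N)^5 = σE := E_pow5 N
  have step0 : Meq (N+1) (P N * P N) (P N * P N * (σE * σP)) := by
    have := (Meq.refl _ (P N * P N)).mul hEP5.symm
    rwa [mul_one] at this
  have step1 : P N * P N * (σE * σP)
      = ((E N * P N) * (E N * P N)) * ((E N ^ 2) * (E N * σP)) := by
    rw [← hfrob]; ring
  have step2 : Meq (N+1) (((E N * P N) * (E N * P N)) * ((E N ^ 2) * (E N * σP)))
      ((1 * 1) * ((J N * P N) * (E N * σP))) :=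
    ((EP N).mul (EP N)).mul ((jacP N).mul (Meq.refl _ (E N * σP)))
  have step3 : ((1:R[X]) * 1) * ((J N * P N) * (E N * σP))
      = (E N * P N) * (J N * σP) := by ring
  have step4 : Meq (N+1) ((E N * P N) * (J N * σP)) (1 * (J N * σP)) :=
    (EP N).mul (Meq.refl _ (J N * σP))
  have chain := ((step0.trans (by rw [step1]; exact step2)).trans (by rw [step3]; exact step4))
  rwa [one_mul] at chain

lemma coeff_JσP (N n : ℕ) : (J N * (aeval (X^5 : R[X]) (P N))).coeff (5*n+3) = 0 := by
  have hσP : aeval (X^5 : R[X]) (P N) = ∑ m ∈ range (N+1), C (pp m) * X^(5*m) := by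
    rw [P, map_sum]
    refine Finset.sum_congr rfl fun m _ => ?_
    rw [map_mul, aeval_C, map_pow, aeval_X, ← pow_mul, Polynomial.algebraMap_eq]
  rw [hσP, J, Finset.sum_mul_sum]
  rw [finset_sum_coeff]
  apply Finset.sum_eq_zero
  intro k _
  rw [finset_sum_coeff]
  apply Finset.sum_eq_zero
  intro m _
  have hterm : (C (a k) * X^(T k)) * (C (pp m) * X^(5*m)) = C (a k * pp m) * X^(T k + 5*m) := by
    rw [C_mul, pow_add]; ring
  rw [hterm, Polynomial.coeff_C_mul, Polynomial.coeff_X_pow]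
  by_cases hcond : 5*n+3 = T k + 5*m
  · have hdvd : 5 ∣ 2*k+1 := five_dvd_of_T (m := m) (M := n) (by omega)
    have hzero : ((2*k+1 : ℕ) : R) = 0 := (ZMod.natCast_eq_zero_iff _ _).2 hdvd
    have hak : a k = 0 := by
      rw [a, show (2*(k:R)+1) = ((2*k+1 : ℕ) : R) by push_cast; ring, hzero, mul_zero]
    simp [hak]
  · rw [if_neg hcond, mul_zero]

lemma colored_eq_coeff (n : ℕ) :
    ((coloredPartitions 2 (5*n+3) : ℕ) : R) = (P (5*n+3) * P (5*n+3)).coeff (5*n+3) := by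
  set N := 5*n+3 with hN
  rw [Polynomial.coeff_mul, coloredPartitions, Finset.Nat.antidiagonalTuple_two,
    Finset.sum_map]
  push_cast
  refine Finset.sum_congr rfl fun x hx => ?_
  rw [Finset.HasAntidiagonal.mem_antidiagonal] at hx
  rw [Fin.prod_univ_two]
  simp only [Equiv.coe_toEmbedding, piFinTwoEquiv_symm_apply, Function.Embedding.coeFn_mk,
    Matrix.cons_val_zero, Matrix.cons_val_one, Matrix.head_cons]
  norm_num [Fin.cons_zero, show (1 : Fin 2) = Fin.succ 0 from rfl, Fin.cons_succ,
    P_coeff (by omega : x.1 ≤ N), P_coeff (by omega : x.2 ≤ N), pp]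

theorem key (n : ℕ) : ((coloredPartitions 2 (5*n+3) : ℕ) : R) = 0 := by
  rw [colored_eq_coeff n, (main (5*n+3)).coeff (by omega : 5*n+3 < 5*n+3+1), coeff_JσP]

end Assembly

end P253

theorem p2_5n3 (n : ℕ) :
    coloredPartitions (2) (5 * n + 3) ≡ 0 [MOD 5] := by
  have h := P253.key n
  rw [show 5*n+3 = 5 * n + 3 by omega] at h
  have hdvd : 5 ∣ coloredPartitions 2 (5 * n + 3) :=
    (ZMod.natCast_eq_zero_iff _ _).1 h
  exact (Nat.modEq_zero_iff_dvd).2 hdvd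
end
end
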